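/- The improper integral over the real line of the complex rational function x ↦ (−4i + 16x + 4ix²)/((x−i)⁵(x+i)⁴) equals 25π/16. -/

import Mathlib

open Complex MeasureTheory Filter Topology
set_option maxHeartbeats 2000000 in


noncomputable def Ga (z : ℂ) : ℂ :=
  ((25/16 : ℂ) * z) / (z^2+1) + ((25/24 : ℂ) * z) / (z^2+1)^2
    + ((5/6 : ℂ) * z) / (z^2+1)^3 - ((1 : ℂ) * z) / (z^2+1)^4
    - ((2/3 : ℂ) * I) / (z^2+1)^3 - I / (z^2+1)^4

noncomputable def Fa (x : ℝ) : ℂ := Ga x + (25/16 : ℂ) * (Real.arctan x : ℂ)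

lemma hu_ne (x : ℝ) : ((x:ℂ)^2+1) ≠ 0 := by
  have h : ((x^2+1 : ℝ):ℂ) ≠ 0 := by
    exact_mod_cast (by positivity : (x^2+1 : ℝ) ≠ 0)
  push_cast at h; exact h

lemma hxm_ne (x : ℝ) : (x:ℂ) - I ≠ 0 := by
  intro h
  have := congrArg Complex.im h
  simp at this

lemma hxp_ne (x : ℝ) : (x:ℂ) + I ≠ 0 := by
  intro h
  have := congrArg Complex.im h
  simp at this

lemma I2 : (I:ℂ)^2 = -1 := I_sq
lemma I3 : (I:ℂ)^3 = -I := by rw [pow_succ, I2]; ring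
lemma I4 : (I:ℂ)^4 = 1 := by rw [pow_succ, I3]; simp [I_mul_I]
lemma I5 : (I:ℂ)^5 = I := by rw [pow_succ, I4, one_mul]
lemma I6 : (I:ℂ)^6 = -1 := by rw [pow_succ, I5, I_mul_I]
lemma I7 : (I:ℂ)^7 = -I := by rw [pow_succ, I6]; ring
lemma I8 : (I:ℂ)^8 = 1 := by rw [pow_succ, I7]; simp [I_mul_I]
lemma I9 : (I:ℂ)^9 = I := by rw [pow_succ, I8, one_mul]
lemma I10 : (I:ℂ)^10 = -1 := by rw [pow_succ, I9, I_mul_I]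
lemma I11 : (I:ℂ)^11 = -I := by rw [pow_succ, I10]; ring
lemma I12 : (I:ℂ)^12 = 1 := by rw [pow_succ, I11]; simp [I_mul_I]
lemma I13 : (I:ℂ)^13 = I := by rw [pow_succ, I12, one_mul]
lemma I14 : (I:ℂ)^14 = -1 := by rw [pow_succ, I13, I_mul_I]
lemma I15 : (I:ℂ)^15 = -I := by rw [pow_succ, I14]; ring
lemma I16 : (I:ℂ)^16 = 1 := by rw [pow_succ, I15]; simp [I_mul_I]

set_option maxHeartbeats 1000000 in
lemma Fa_deriv (x : ℝ) : HasDerivAt Fa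
    ((-4 * I + 16 * x + 4 * I * x ^ 2) / (((x:ℂ) - I) ^ 5 * ((x:ℂ) + I) ^ 4)) x := by
  have hz : HasDerivAt (fun z : ℂ => z) 1 (x:ℂ) := hasDerivAt_id _
  have hu : HasDerivAt (fun z : ℂ => z^2+1) (2 * (x:ℂ)) (x:ℂ) := by
    simpa using ((hasDerivAt_pow 2 (x:ℂ)).add_const 1)
  have hne := hu_ne x
  have h1 := (hz.const_mul (25/16 : ℂ)).div hu hne
  have h2 := (hz.const_mul (25/24 : ℂ)).div (hu.pow 2) (pow_ne_zero 2 hne)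
  have h3 := (hz.const_mul (5/6 : ℂ)).div (hu.pow 3) (pow_ne_zero 3 hne)
  have h4 := (hz.const_mul (1 : ℂ)).div (hu.pow 4) (pow_ne_zero 4 hne)
  have h5 := (hasDerivAt_const (x:ℂ) ((2/3:ℂ)*I)).div (hu.pow 3) (pow_ne_zero 3 hne)
  have h6 := (hasDerivAt_const (x:ℂ) (I:ℂ)).div (hu.pow 4) (pow_ne_zero 4 hne)
  have hne5 := pow_ne_zero 5 hne
  have T1 : HasDerivAt (fun z : ℂ => ((25/16 : ℂ) * z) / (z^2+1))
      (((25/16 : ℂ) * (((x:ℂ)^2+1) - 2*(x:ℂ)^2) * ((x:ℂ)^2+1)^3) / ((x:ℂ)^2+1)^5) x := by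
    refine h1.congr_deriv (Eq.symm ?_)
    rw [div_eq_div_iff hne5 (pow_ne_zero 2 hne)]; ring
  have T2 : HasDerivAt (fun z : ℂ => ((25/24 : ℂ) * z) / (z^2+1)^2)
      (((25/24 : ℂ) * (((x:ℂ)^2+1) - 4*(x:ℂ)^2) * ((x:ℂ)^2+1)^2) / ((x:ℂ)^2+1)^5) x := by
    refine h2.congr_deriv (Eq.symm ?_)
    simp only [Pi.pow_apply]
    rw [div_eq_div_iff hne5 (pow_ne_zero 2 (pow_ne_zero 2 hne))]; ring
  have T3 : HasDerivAt (fun z : ℂ => ((5/6 : ℂ) * z) / (z^2+1)^3)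
      (((5/6 : ℂ) * (((x:ℂ)^2+1) - 6*(x:ℂ)^2) * ((x:ℂ)^2+1)) / ((x:ℂ)^2+1)^5) x := by
    refine h3.congr_deriv (Eq.symm ?_)
    simp only [Pi.pow_apply]
    rw [div_eq_div_iff hne5 (pow_ne_zero 2 (pow_ne_zero 3 hne))]; ring
  have T4 : HasDerivAt (fun z : ℂ => ((1 : ℂ) * z) / (z^2+1)^4)
      (((((x:ℂ)^2+1) - 8*(x:ℂ)^2)) / ((x:ℂ)^2+1)^5) x := by
    refine h4.congr_deriv (Eq.symm ?_)
    simp only [Pi.pow_apply]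
    rw [div_eq_div_iff hne5 (pow_ne_zero 2 (pow_ne_zero 4 hne))]; ring
  have T5 : HasDerivAt (fun z : ℂ => ((2/3 : ℂ) * I) / (z^2+1)^3)
      ((-4 * I * (x:ℂ) * ((x:ℂ)^2+1)) / ((x:ℂ)^2+1)^5) x := by
    refine h5.congr_deriv (Eq.symm ?_)
    simp only [Pi.pow_apply]
    rw [div_eq_div_iff hne5 (pow_ne_zero 2 (pow_ne_zero 3 hne))]; ring
  have T6 : HasDerivAt (fun z : ℂ => (I : ℂ) / (z^2+1)^4)
      ((-8 * I * (x:ℂ)) / ((x:ℂ)^2+1)^5) x := by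
    refine h6.congr_deriv (Eq.symm ?_)
    simp only [Pi.pow_apply]
    rw [div_eq_div_iff hne5 (pow_ne_zero 2 (pow_ne_zero 4 hne))]; ring
  have hG : HasDerivAt Ga
      (((25/16 : ℂ) * (((x:ℂ)^2+1) - 2*(x:ℂ)^2) * ((x:ℂ)^2+1)^3
        + (25/24 : ℂ) * (((x:ℂ)^2+1) - 4*(x:ℂ)^2) * ((x:ℂ)^2+1)^2
        + (5/6 : ℂ) * (((x:ℂ)^2+1) - 6*(x:ℂ)^2) * ((x:ℂ)^2+1)
        - (((x:ℂ)^2+1) - 8*(x:ℂ)^2)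
        - -4 * I * (x:ℂ) * ((x:ℂ)^2+1)
        - -8 * I * (x:ℂ)) / ((x:ℂ)^2+1)^5) (x:ℂ) := by
    have := ((((T1.add T2).add T3).sub T4).sub T5).sub T6
    refine this.congr_deriv ?_
    rw [← add_div, ← add_div, div_sub_div_same, div_sub_div_same, div_sub_div_same]
  have h7 := ((Real.hasDerivAt_arctan x).ofReal_comp).const_mul (25/16 : ℂ)
  have H := (hG.comp_ofReal).add h7
  have hsplit : (-4 * I + 16 * (x:ℂ) + 4 * I * (x:ℂ) ^ 2) / (((x:ℂ) - I) ^ 5 * ((x:ℂ) + I) ^ 4)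
      = (4*I*(x:ℂ)^3 + 12*(x:ℂ)^2 + 12*I*(x:ℂ) + 4) / ((x:ℂ)^2+1)^5 := by
    rw [div_eq_div_iff (mul_ne_zero (pow_ne_zero 5 (hxm_ne x)) (pow_ne_zero 4 (hxp_ne x))) hne5]
    ring_nf
    simp only [I2, I3, I4, I5, I6, I7, I8, I9, I10, I11, I12, I13, I14, I15, I16]
    ring
  refine H.congr_deriv (Eq.symm ?_)
  rw [hsplit]
  have hu1 : (1:ℂ) + (x:ℂ)^2 ≠ 0 := by simpa [add_comm] using hu_ne x
  push_cast
  field_simp [hne, hu1]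
  ring

lemma norm_u (x : ℝ) : ‖(x:ℂ)^2+1‖ = x^2+1 := by
  rw [show (x:ℂ)^2+1 = ((x^2+1 : ℝ):ℂ) by push_cast; ring, Complex.norm_real]
  exact abs_of_pos (by positivity)

lemma norm_xm_sq (x : ℝ) : ‖(x:ℂ) - I‖^2 = x^2+1 := by
  rw [Complex.sq_norm, Complex.normSq_apply]
  simp
  ring

lemma norm_xp_sq (x : ℝ) : ‖(x:ℂ) + I‖^2 = x^2+1 := by
  rw [Complex.sq_norm, Complex.normSq_apply]
  simp
  ring

lemma integrable_g : Integrable (fun x : ℝ =>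
    ((-4 * I + 16 * x + 4 * I * x ^ 2) / (((x:ℂ) - I) ^ 5 * ((x:ℂ) + I) ^ 4) : ℂ)) := by
  have hc : Continuous (fun x : ℝ =>
      ((-4 * I + 16 * x + 4 * I * x ^ 2) / (((x:ℂ) - I) ^ 5 * ((x:ℂ) + I) ^ 4) : ℂ)) := by
    apply Continuous.div (by continuity) (by continuity)
    intro x
    exact mul_ne_zero (pow_ne_zero _ (hxm_ne x)) (pow_ne_zero _ (hxp_ne x))
  refine (integrable_inv_one_add_sq.const_mul (12:ℝ)).mono' hc.aestronglyMeasurable ?_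
  refine Filter.Eventually.of_forall (fun x => ?_)
  have hxm1 : (1:ℝ) ≤ ‖(x:ℂ) - I‖ := by
    nlinarith [norm_xm_sq x, norm_nonneg ((x:ℂ) - I), sq_nonneg x]
  have hnum : ‖(-4 * I + 16 * (x:ℂ) + 4 * I * (x:ℂ) ^ 2 : ℂ)‖ ≤ 12 * (1 + x^2) := by
    calc ‖(-4 * I + 16 * (x:ℂ) + 4 * I * (x:ℂ) ^ 2 : ℂ)‖
        ≤ ‖(-4 * I + 16 * (x:ℂ) : ℂ)‖ + ‖(4 * I * (x:ℂ)^2 : ℂ)‖ := norm_add_le _ _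
      _ ≤ (‖(-4 * I : ℂ)‖ + ‖(16 * (x:ℂ) : ℂ)‖) + ‖(4 * I * (x:ℂ)^2 : ℂ)‖ := by
          exact add_le_add_left (norm_add_le _ _) _
      _ = (4 + 16 * |x|) + 4 * x^2 := by
          have na : ‖(-4 * I : ℂ)‖ = 4 := by
            rw [show (-4 * I : ℂ) = -(4 * I) by ring, norm_neg, norm_mul, Complex.norm_I, mul_one]
            simp
          have nb : ‖(16 * (x:ℂ) : ℂ)‖ = 16 * |x| := by
            rw [norm_mul, Complex.norm_real]
            norm_num
          have nc : ‖(4 * I * (x:ℂ)^2 : ℂ)‖ = 4 * x^2 := by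
            rw [norm_mul, norm_mul, norm_pow, Complex.norm_real, Complex.norm_I, mul_one,
              Real.norm_eq_abs, _root_.sq_abs]
            simp
          rw [na, nb, nc]
      _ ≤ 12 * (1 + x^2) := by nlinarith [_root_.sq_abs x, abs_nonneg x, sq_nonneg (|x| - 1)]
  have hden : (1 + x^2)^4 ≤ ‖(((x:ℂ) - I) ^ 5 * ((x:ℂ) + I) ^ 4 : ℂ)‖ := by
    rw [norm_mul, norm_pow, norm_pow]
    have h1 : ‖(x:ℂ) - I‖^5 = (x^2+1)^2 * ‖(x:ℂ) - I‖ := by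
      rw [show (5:ℕ) = 2*2+1 by norm_num, pow_succ, pow_mul, norm_xm_sq]
    have h2 : ‖(x:ℂ) + I‖^4 = (x^2+1)^2 := by
      rw [show (4:ℕ) = 2*2 by norm_num, pow_mul, norm_xp_sq]
    rw [h1, h2]
    have hb : (0:ℝ) < x^2+1 := by positivity
    nlinarith [sq_nonneg ((x^2+1)^2), sq_nonneg x]
  rw [norm_div]
  calc ‖(-4 * I + 16 * (x:ℂ) + 4 * I * (x:ℂ) ^ 2 : ℂ)‖ / ‖(((x:ℂ) - I) ^ 5 * ((x:ℂ) + I) ^ 4 : ℂ)‖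
      ≤ (12 * (1 + x^2)) / (1 + x^2)^4 :=
        div_le_div₀ (by positivity) hnum (by positivity) hden
    _ ≤ 12 * (1 + x^2)⁻¹ := by
        rw [div_le_iff₀ (by positivity), mul_assoc]
        have h4 : (1+x^2)^2 ≤ (1+x^2)^4 := pow_le_pow_right₀ (by nlinarith) (by norm_num)
        have : (1+x^2)⁻¹ * (1+x^2)^4 = (1+x^2)^3 := by
          field_simp
        rw [this]
        nlinarith [sq_nonneg x, sq_nonneg (x^2)]

lemma Ga_lim (l : Filter ℝ) (hl : Filter.Tendsto (fun x : ℝ => |x|) l Filter.atTop) :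
    Filter.Tendsto (fun x : ℝ => Ga x) l (nhds 0) := by
  have key : ∀ x : ℝ, 1 ≤ |x| → ‖Ga x‖ ≤ 7 * |x|⁻¹ := by
    intro x hx
    have hx0 : (0:ℝ) < |x| := lt_of_lt_of_le one_pos hx
    have hxx : |x|⁻¹ * x^2 = |x| := by
      rw [← _root_.sq_abs x, sq, ← mul_assoc, inv_mul_cancel₀ (ne_of_gt hx0), one_mul]
    have hterm : ∀ (c : ℂ) (k : ℕ), 1 ≤ k →
        ‖c * (x:ℂ) / ((x:ℂ)^2+1)^k‖ ≤ ‖c‖ * |x|⁻¹ := by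
      intro c k hk
      have hxk : x^2 ≤ (x^2+1)^k :=
        le_trans (by nlinarith) (le_self_pow₀ (by nlinarith) (by omega))
      rw [norm_div, norm_mul, norm_pow, norm_u, Complex.norm_real, Real.norm_eq_abs,
        div_le_iff₀ (by positivity)]
      calc ‖c‖ * |x| = ‖c‖ * |x|⁻¹ * x^2 := by rw [mul_assoc, hxx]
        _ ≤ ‖c‖ * |x|⁻¹ * (x^2+1)^k :=
            mul_le_mul_of_nonneg_left hxk (by positivity)
    have hterm' : ∀ (c : ℂ) (k : ℕ), 1 ≤ k →
        ‖c / ((x:ℂ)^2+1)^k‖ ≤ ‖c‖ * |x|⁻¹ := by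
      intro c k hk
      have hxk : x^2 ≤ (x^2+1)^k :=
        le_trans (by nlinarith) (le_self_pow₀ (by nlinarith) (by omega))
      rw [norm_div, norm_pow, norm_u, div_le_iff₀ (by positivity)]
      calc ‖c‖ = ‖c‖ * |x|⁻¹ * |x| := by
            rw [mul_assoc, inv_mul_cancel₀ (ne_of_gt hx0), mul_one]
        _ ≤ ‖c‖ * |x|⁻¹ * (x^2+1)^k := by
            refine mul_le_mul_of_nonneg_left ?_ (by positivity)
            nlinarith [_root_.sq_abs x]
    have n1 := hterm (25/16 : ℂ) 1 le_rfl
    have n2 := hterm (25/24 : ℂ) 2 one_le_two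
    have n3 := hterm (5/6 : ℂ) 3 (by norm_num)
    have n4 := hterm (1 : ℂ) 4 (by norm_num)
    have n5 := hterm' ((2/3 : ℂ) * I) 3 (by norm_num)
    have n6 := hterm' (I : ℂ) 4 (by norm_num)
    rw [pow_one] at n1
    have e1 : ‖(25/16 : ℂ)‖ = 25/16 := by
      rw [show (25/16:ℂ) = ((25/16:ℝ):ℂ) by norm_num, Complex.norm_real]; norm_num
    have e2 : ‖(25/24 : ℂ)‖ = 25/24 := by
      rw [show (25/24:ℂ) = ((25/24:ℝ):ℂ) by norm_num, Complex.norm_real]; norm_num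
    have e3 : ‖(5/6 : ℂ)‖ = 5/6 := by
      rw [show (5/6:ℂ) = ((5/6:ℝ):ℂ) by norm_num, Complex.norm_real]; norm_num
    have e5 : ‖((2/3 : ℂ) * I)‖ = 2/3 := by
      rw [norm_mul, Complex.norm_I, show (2/3:ℂ) = ((2/3:ℝ):ℂ) by norm_num, Complex.norm_real]
      norm_num
    rw [e1] at n1; rw [e2] at n2; rw [e3] at n3; rw [norm_one] at n4
    rw [e5] at n5; rw [Complex.norm_I] at n6
    have hinv : (0:ℝ) < |x|⁻¹ := by positivity
    calc ‖Ga x‖ ≤ ‖((25/16 : ℂ) * x) / ((x:ℂ)^2+1) + ((25/24 : ℂ) * x) / ((x:ℂ)^2+1)^2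
          + ((5/6 : ℂ) * x) / ((x:ℂ)^2+1)^3 - ((1 : ℂ) * x) / ((x:ℂ)^2+1)^4
          - ((2/3 : ℂ) * I) / ((x:ℂ)^2+1)^3‖ + ‖(I:ℂ) / ((x:ℂ)^2+1)^4‖ := norm_sub_le _ _
      _ ≤ (‖((25/16 : ℂ) * x) / ((x:ℂ)^2+1) + ((25/24 : ℂ) * x) / ((x:ℂ)^2+1)^2
          + ((5/6 : ℂ) * x) / ((x:ℂ)^2+1)^3 - ((1 : ℂ) * x) / ((x:ℂ)^2+1)^4‖
          + ‖((2/3 : ℂ) * I) / ((x:ℂ)^2+1)^3‖) + ‖(I:ℂ) / ((x:ℂ)^2+1)^4‖ := by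
          exact add_le_add_left (norm_sub_le _ _) _
      _ ≤ ((‖((25/16 : ℂ) * x) / ((x:ℂ)^2+1) + ((25/24 : ℂ) * x) / ((x:ℂ)^2+1)^2
          + ((5/6 : ℂ) * x) / ((x:ℂ)^2+1)^3‖ + ‖((1 : ℂ) * x) / ((x:ℂ)^2+1)^4‖)
          + ‖((2/3 : ℂ) * I) / ((x:ℂ)^2+1)^3‖) + ‖(I:ℂ) / ((x:ℂ)^2+1)^4‖ := by
          exact add_le_add_left (add_le_add_left (norm_sub_le _ _) _) _
      _ ≤ (((‖((25/16 : ℂ) * x) / ((x:ℂ)^2+1) + ((25/24 : ℂ) * x) / ((x:ℂ)^2+1)^2‖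
          + ‖((5/6 : ℂ) * x) / ((x:ℂ)^2+1)^3‖) + ‖((1 : ℂ) * x) / ((x:ℂ)^2+1)^4‖)
          + ‖((2/3 : ℂ) * I) / ((x:ℂ)^2+1)^3‖) + ‖(I:ℂ) / ((x:ℂ)^2+1)^4‖ := by
          exact add_le_add_left (add_le_add_left (add_le_add_left (norm_add_le _ _) _) _) _
      _ ≤ ((((‖((25/16 : ℂ) * x) / ((x:ℂ)^2+1)‖ + ‖((25/24 : ℂ) * x) / ((x:ℂ)^2+1)^2‖)
          + ‖((5/6 : ℂ) * x) / ((x:ℂ)^2+1)^3‖) + ‖((1 : ℂ) * x) / ((x:ℂ)^2+1)^4‖)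
          + ‖((2/3 : ℂ) * I) / ((x:ℂ)^2+1)^3‖) + ‖(I:ℂ) / ((x:ℂ)^2+1)^4‖ := by
          exact add_le_add_left (add_le_add_left (add_le_add_left (add_le_add_left
            (norm_add_le _ _) _) _) _) _
      _ ≤ ((((25/16 * |x|⁻¹ + 25/24 * |x|⁻¹) + 5/6 * |x|⁻¹) + 1 * |x|⁻¹) + 2/3 * |x|⁻¹)
          + 1 * |x|⁻¹ := by
          gcongr <;> assumption
      _ ≤ 7 * |x|⁻¹ := by nlinarith
  refine squeeze_zero_norm' (a := fun x : ℝ => 7 * |x|⁻¹) ?_ ?_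
  · filter_upwards [hl.eventually_ge_atTop 1] with x hx
    exact key x hx
  · have := (tendsto_inv_atTop_zero.comp hl).const_mul (7:ℝ)
    simpa using this

theorem integral_case_a_III :
    ∫ x : ℝ, ((-4 * I + 16 * x + 4 * I * x ^ 2) /
      ((x - I) ^ 5 * (x + I) ^ 4) : ℂ) = ((25 : ℂ) / 16) * (Real.pi : ℂ) := by
  have harctop : Filter.Tendsto (fun x : ℝ => ((Real.arctan x : ℝ) : ℂ)) Filter.atTop
      (nhds ((Real.pi/2 : ℝ) : ℂ)) :=
    (Complex.continuous_ofReal.tendsto _).comp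
      (tendsto_nhds_of_tendsto_nhdsWithin Real.tendsto_arctan_atTop)
  have harcbot : Filter.Tendsto (fun x : ℝ => ((Real.arctan x : ℝ) : ℂ)) Filter.atBot
      (nhds ((-(Real.pi/2) : ℝ) : ℂ)) :=
    (Complex.continuous_ofReal.tendsto _).comp
      (tendsto_nhds_of_tendsto_nhdsWithin Real.tendsto_arctan_atBot)
  have htop : Filter.Tendsto Fa Filter.atTop
      (nhds (0 + (25/16 : ℂ) * ((Real.pi/2 : ℝ) : ℂ))) := by
    exact (Ga_lim _ (by simpa using tendsto_abs_atTop_atTop)).add (harctop.const_mul _)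
  have hbot : Filter.Tendsto Fa Filter.atBot
      (nhds (0 + (25/16 : ℂ) * ((-(Real.pi/2) : ℝ) : ℂ))) := by
    exact (Ga_lim _ (by simpa using tendsto_abs_atBot_atTop)).add (harcbot.const_mul _)
  have := MeasureTheory.integral_of_hasDerivAt_of_tendsto Fa_deriv integrable_g hbot htop
  rw [this]
  push_cast
  ring
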